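/- Proposition 1 (outage probability with hardware impairments): Let N ≥ 1, let X_1, …, X_N be independent rate-1 exponential random variables, let γ̃ > 0 be the SNR, let c_1, …, c_N ≥ 0 be the impairment levels, let r_th > 0 be the rate threshold and γ_th = 2^{r_th} − 1. Define the SNDR γ = (γ̃ ∑_{i=1}^N X_i)/(γ̃ ∑_{i=1}^N c_i X_i + 1) and b_i = 1 − c_i γ_th. If the b_i are positive and pairwise distinct, then the outage probability satisfies P(log₂(1 + γ) ≤ r_th) = ∑_{i=1}^N Ξ_i (1 − exp(−γ_th/(γ̃ b_i))), where Ξ_i = ∏_{j≠i} b_i/(b_i − b_j). -/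

import Mathlib

open MeasureTheory ProbabilityTheory Finset

section OutageAuxSection
open MeasureTheory ProbabilityTheory Finset Real

namespace OutageAux

noncomputable def XiC {n : ℕ} (b : Fin n → ℝ) (i : Fin n) : ℝ :=
  ∏ j ∈ univ.erase i, b i / (b i - b j)

noncomputable def Gfun {n : ℕ} (b : Fin n → ℝ) (s : ℝ) : ℝ :=
  if 0 ≤ s then 1 - ∑ i, XiC b i * Real.exp (-(s / b i)) else 0

lemma sumXi_eq_one {n : ℕ} (b : Fin (n+1) → ℝ) (hb0 : ∀ i, b i ≠ 0)
    (hinj : Function.Injective b) :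
    ∑ i, XiC b i = 1 := by
  unfold XiC
  set v : Fin (n+1) → ℝ := fun i => (b i)⁻¹ with hv
  have hvinj : Set.InjOn v (univ : Finset (Fin (n+1))) := by
    intro i _ j _ hij
    exact hinj (by
      have := congrArg (·⁻¹) hij
      simpa [hv, inv_inv] using this)
  have hsum := Lagrange.sum_basis (s := univ) (v := v) hvinj univ_nonempty
  have := congrArg (Polynomial.eval 0) hsum
  rw [Polynomial.eval_finset_sum, Polynomial.eval_one] at this
  rw [← this]
  refine Finset.sum_congr rfl fun i _ => ?_
  rw [Lagrange.basis, Polynomial.eval_prod]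
  refine Finset.prod_congr rfl fun j hj => ?_
  have hij : i ≠ j := (Finset.ne_of_mem_erase hj).symm
  have hbij : b i ≠ b j := fun h => hij (hinj h)
  rw [Lagrange.basisDivisor]
  simp only [Polynomial.eval_mul, Polynomial.eval_C, Polynomial.eval_sub, Polynomial.eval_X]
  rw [hv]
  field_simp
  have hne : (1 / b i - 1 / b j) ≠ 0 := by
    rw [sub_ne_zero]
    intro h
    exact hbij (by have := congrArg (fun x : ℝ => x⁻¹) h; simpa [one_div, inv_inv] using this)
  rw [eq_div_iff hne]
  have e1 : b i * (1 / b i) = 1 := by rw [one_div, mul_inv_cancel₀ (hb0 i)]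
  have e2 : b j * (1 / b j) = 1 := by rw [one_div, mul_inv_cancel₀ (hb0 j)]
  linear_combination e1 - e2

lemma erase_succ_eq {n : ℕ} (i : Fin (n+1)) :
    (univ : Finset (Fin (n+2))).erase i.succ
      = insert 0 ((univ.erase i).image Fin.succ) := by
  ext j
  induction j using Fin.cases with
  | zero => simp [Ne.symm (Fin.succ_ne_zero i)]
  | succ k => simp [Fin.succ_inj, Fin.succ_ne_zero]

lemma XiC_succ {n : ℕ} (b : Fin (n+2) → ℝ) (i : Fin (n+1)) :
    XiC b i.succ = (b i.succ / (b i.succ - b 0)) * XiC (b ∘ Fin.succ) i := by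
  unfold XiC
  rw [erase_succ_eq, Finset.prod_insert, Finset.prod_image]
  · rfl
  · intro x _ y _ h; exact Fin.succ_injective _ h
  · simp only [Finset.mem_image]
    rintro ⟨k, -, hk⟩
    exact Fin.succ_ne_zero k hk

lemma expM_apply {s : Set ℝ} (hs : MeasurableSet s) :
    expMeasure 1 s = ∫⁻ x in s, exponentialPDF 1 x := by
  rw [expMeasure, gammaMeasure, withDensity_apply _ hs]
  rfl

instance : IsProbabilityMeasure (expMeasure 1) := isProbabilityMeasure_expMeasure one_pos

lemma expM_Iic (x : ℝ) :
    expMeasure 1 (Set.Iic x) = ENNReal.ofReal (if 0 ≤ x then 1 - Real.exp (-x) else 0) := by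
  rw [expM_apply measurableSet_Iic, lintegral_exponentialPDF_eq_antiDeriv one_pos]
  simp

lemma expM_Iio : expMeasure 1 (Set.Iio 0) = 0 := by
  rw [expM_apply measurableSet_Iio]
  exact lintegral_exponentialPDF_of_nonpos le_rfl

lemma integral_exp_mul {c T : ℝ} (hc : c ≠ 0) :
    ∫ x in (0:ℝ)..T, Real.exp (c * x) = (Real.exp (c * T) - 1) / c := by
  rw [intervalIntegral.integral_comp_mul_left (fun x => Real.exp x) hc, integral_exp]
  rw [mul_zero, Real.exp_zero, smul_eq_mul]
  field_simp

lemma measurable_Gfun {n : ℕ} (b : Fin n → ℝ) : Measurable (Gfun b) := by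
  unfold Gfun
  refine Measurable.ite (measurableSet_le measurable_const measurable_id) ?_ measurable_const
  refine measurable_const.sub (Finset.measurable_sum _ fun i _ => ?_)
  exact ((measurable_id.div_const (b i)).neg.exp).const_mul _

lemma hypo (n : ℕ) :
    ∀ (b : Fin (n+1) → ℝ), (∀ i, 0 < b i) → Function.Injective b → ∀ s : ℝ,
      0 ≤ Gfun b s ∧
      Measure.pi (fun _ : Fin (n+1) => expMeasure 1) {x | ∑ i, b i * x i ≤ s}
        = ENNReal.ofReal (Gfun b s) := by
  induction n with
  | zero =>
    intro b hbpos hinj s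
    have hb0 : (0:ℝ) < b 0 := hbpos 0
    have hXi : XiC b 0 = 1 := by
      unfold XiC
      rw [show (univ : Finset (Fin 1)).erase 0 = ∅ by decide, Finset.prod_empty]
    have hG : Gfun b s = if 0 ≤ s then 1 - Real.exp (-(s / b 0)) else 0 := by
      unfold Gfun
      rw [show (∑ i, XiC b i * Real.exp (-(s / b i)))
          = XiC b 0 * Real.exp (-(s / b 0)) from Fin.sum_univ_one _, hXi, one_mul]
    have hiff : 0 ≤ s / b 0 ↔ 0 ≤ s := by
      rw [le_div_iff₀ hb0, zero_mul]
    have hset : {x : Fin 1 → ℝ | ∑ i, b i * x i ≤ s}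
        = (MeasurableEquiv.funUnique (Fin 1) ℝ) ⁻¹' Set.Iic (s / b 0) := by
      ext x
      simp only [Set.mem_setOf_eq, Set.mem_preimage, Set.mem_Iic,
        MeasurableEquiv.funUnique_apply]
      rw [show (∑ i, b i * x i) = b 0 * x 0 from Fin.sum_univ_one _,
        le_div_iff₀ hb0, mul_comm]
      rfl
    constructor
    · rw [hG]
      split_ifs with h
      · have h1 : -(s / b 0) ≤ 0 := neg_nonpos.2 (div_nonneg h hb0.le)
        have := Real.exp_le_one_iff.2 h1
        linarith
      · exact le_rfl
    · erw [hset,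
        (measurePreserving_funUnique (expMeasure 1) (Fin 1)).measure_preimage
          measurableSet_Iic.nullMeasurableSet,
        expM_Iic, hG]
      congr 1
      rw [if_congr hiff rfl rfl]
  | succ n ih =>
    intro b hbpos hinj s
    set b' : Fin (n+1) → ℝ := fun j => b j.succ with hb'def
    have hb'pos : ∀ i, 0 < b' i := fun i => hbpos _
    have hb'inj : Function.Injective b' := fun i j h => Fin.succ_injective _ (hinj h)
    have IH := ih b' hb'pos hb'inj
    have hb00 : (0:ℝ) < b 0 := hbpos 0
    have hb'ne0 : ∀ i, b' i ≠ 0 := fun i => (hb'pos i).ne'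
    have hbne : ∀ i, b' i ≠ b 0 := fun i => fun h => (Fin.succ_ne_zero i) (hinj h)
    have hdiff : ∀ i, b' i - b 0 ≠ 0 := fun i => sub_ne_zero.2 (hbne i)
    set h : ℝ → ℝ := fun x => (if 0 ≤ x then Real.exp (-x) else 0) * Gfun b' (s - b 0 * x)
      with hhdef
    have h_nonneg : ∀ x, 0 ≤ h x := by
      intro x
      refine mul_nonneg ?_ (IH _).1
      split_ifs with hx
      · positivity
      · exact le_rfl
    -- the key analytic fact
    have key : Integrable h volume ∧ ∫ x, h x = Gfun b s := by
      by_cases hs : 0 ≤ s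
      · -- positive case
        set T : ℝ := s / b 0 with hTdef
        have hT : 0 ≤ T := div_nonneg hs hb00.le
        have hbT : b 0 * T = s := by
          rw [hTdef, mul_comm, div_mul_cancel₀ _ hb00.ne']
        set K : Fin (n+1) → ℝ := fun i => XiC b' i * Real.exp (-(s / b' i)) with hKdef
        set cc : Fin (n+1) → ℝ := fun i => b 0 / b' i - 1 with hccdef
        have hcc : ∀ i, cc i ≠ 0 := by
          intro i
          rw [hccdef]
          simp only [sub_ne_zero]
          exact fun hh => (hbne i) ((div_eq_one_iff_eq (hb'ne0 i)).mp hh).symm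
        set φ : ℝ → ℝ := fun x => Real.exp (-x) - ∑ i, K i * Real.exp (cc i * x) with hφdef
        have hφcont : Continuous φ := by fun_prop
        have hsplit : ∀ x, Real.exp (-x) *
            (1 - ∑ i, XiC b' i * Real.exp (-((s - b 0 * x) / b' i))) = φ x := by
          intro x
          rw [hφdef, mul_sub, mul_one, Finset.mul_sum]
          congr 1
          refine Finset.sum_congr rfl fun i _ => ?_
          rw [hKdef, hccdef]
          rw [show Real.exp (-x) * (XiC b' i * Real.exp (-((s - b 0 * x) / b' i)))
              = XiC b' i * (Real.exp (-x) * Real.exp (-((s - b 0 * x) / b' i))) by ring,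
            show XiC b' i * Real.exp (-(s / b' i)) * Real.exp ((b 0 / b' i - 1) * x)
              = XiC b' i * (Real.exp (-(s / b' i)) * Real.exp ((b 0 / b' i - 1) * x)) by ring]
          congr 1
          rw [← Real.exp_add, ← Real.exp_add]
          congr 1
          field_simp
          ring
        have hind : h = Set.indicator (Set.Icc 0 T) φ := by
          funext x
          by_cases hx : 0 ≤ x
          · by_cases hxT : x ≤ T
            · rw [Set.indicator_of_mem (Set.mem_Icc.mpr ⟨hx, hxT⟩)]
              have h2 : 0 ≤ s - b 0 * x := by
                rw [sub_nonneg, ← hbT]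
                exact mul_le_mul_of_nonneg_left hxT hb00.le
              rw [hhdef]
              simp only [if_pos hx]
              rw [Gfun, if_pos h2]
              exact hsplit x
            · rw [Set.indicator_of_notMem (fun hm => hxT (Set.mem_Icc.mp hm).2)]
              have h2 : ¬ (0 ≤ s - b 0 * x) := by
                push_neg at hxT ⊢
                rw [sub_neg, ← hbT]
                exact mul_lt_mul_of_pos_left hxT hb00
              rw [hhdef]
              simp only [if_pos hx]
              rw [Gfun, if_neg h2, mul_zero]
          · rw [Set.indicator_of_notMem (fun hm => hx (Set.mem_Icc.mp hm).1), hhdef]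
            simp only [if_neg hx, zero_mul]
        have hInt : Integrable h volume := by
          rw [hind]
          exact (hφcont.integrableOn_Icc).integrable_indicator measurableSet_Icc
        refine ⟨hInt, ?_⟩
        have hval : ∫ x, h x = ∫ x in (0:ℝ)..T, φ x := by
          rw [hind, integral_indicator measurableSet_Icc,
            intervalIntegral.integral_of_le hT, integral_Icc_eq_integral_Ioc]
        rw [hval]
        -- compute the interval integral
        have hint1 : IntervalIntegrable (fun x => Real.exp (-x)) volume 0 T :=
          (Real.continuous_exp.comp continuous_neg).intervalIntegrable 0 T
        have hint2 : IntervalIntegrable (fun x => ∑ i, K i * Real.exp (cc i * x)) volume 0 T := by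
          apply Continuous.intervalIntegrable
          fun_prop
        have hI1 : ∫ x in (0:ℝ)..T, Real.exp (-x) = 1 - Real.exp (-T) := by
          have := integral_exp_mul (c := (-1:ℝ)) (T := T) (by norm_num)
          simp only [neg_one_mul] at this
          rw [this]
          ring
        have hcalc : ∫ x in (0:ℝ)..T, φ x
            = (1 - Real.exp (-T)) - ∑ i, K i * ((Real.exp (cc i * T) - 1) / cc i) := by
          rw [hφdef]
          rw [intervalIntegral.integral_sub hint1 hint2, hI1]
          congr 1
          rw [intervalIntegral.integral_finset_sum
            (fun i _ => (Continuous.intervalIntegrable (by fun_prop) 0 T))]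
          refine Finset.sum_congr rfl fun i _ => ?_
          rw [intervalIntegral.integral_const_mul, integral_exp_mul (hcc i)]
        rw [hcalc]
        -- now pure algebra
        have hterm : ∀ i, K i * ((Real.exp (cc i * T) - 1) / cc i)
            = XiC b i.succ * Real.exp (-(s / b' i)) - XiC b i.succ * Real.exp (-(s / b 0)) := by
          intro i
          have harg : cc i * T = s / b' i + -(s / b 0) := by
            rw [hccdef, hTdef]
            field_simp
            ring
          rw [harg, Real.exp_add, hKdef]
          have hXs : XiC b i.succ = (b' i / (b' i - b 0)) * XiC b' i := by
            rw [XiC_succ b i]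
            rfl
          rw [hXs]
          have hcancel : Real.exp (-(s / b' i)) * Real.exp (s / b' i) = 1 := by
            rw [← Real.exp_add]
            simp
          have hrc : (b' i / (b' i - b 0)) * cc i = -1 := by
            rw [hccdef]
            field_simp
            rw [div_eq_iff (hdiff i)]
            have hx : b' i * (b 0 / b' i) = b 0 := by
              rw [mul_div_assoc']
              exact mul_div_cancel_left₀ _ (hb'ne0 i)
            linear_combination hx
          show XiC b' i * Real.exp (-(s / b' i)) *
              ((Real.exp (s / b' i) * Real.exp (-(s / b 0)) - 1) / cc i) = _
          rw [← mul_div_assoc, div_eq_iff (hcc i)]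
          linear_combination (XiC b' i * Real.exp (-(s / b 0))) * hcancel +
            (XiC b' i * Real.exp (-(s / b 0)) - XiC b' i * Real.exp (-(s / b' i))) * hrc
        have hGexp : Gfun b s = 1 - (XiC b 0 * Real.exp (-(s / b 0))
            + ∑ i : Fin (n+1), XiC b i.succ * Real.exp (-(s / b i.succ))) := by
          rw [Gfun, if_pos hs,
            Fin.sum_univ_succ (f := fun i : Fin (n+1+1) => XiC b i * Real.exp (-(s / b i)))]
        rw [hGexp]
        have hXi0 : XiC b 0 = 1 - ∑ i : Fin (n+1), XiC b i.succ := by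
          have h1 := sumXi_eq_one b (fun i => (hbpos i).ne') hinj
          rw [Fin.sum_univ_succ] at h1
          linarith
        rw [hXi0, Finset.sum_congr rfl (fun i (_ : i ∈ univ) => hterm i),
          Finset.sum_sub_distrib, ← Finset.sum_mul]
        have hexpT : Real.exp (-T) = Real.exp (-(s / b 0)) := by rw [hTdef]
        rw [hexpT]
        simp only [hb'def]
        ring
      · -- negative case
        have hzero : h = fun _ => 0 := by
          funext x
          by_cases hx : 0 ≤ x
          · have h2 : ¬ (0 ≤ s - b 0 * x) := by
              push_neg at hs ⊢
              nlinarith [mul_nonneg hb00.le hx]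
            rw [hhdef]
            simp only [if_pos hx]
            rw [Gfun, if_neg h2, mul_zero]
          · rw [hhdef]
            simp only [if_neg hx, zero_mul]
        constructor
        · rw [hzero]
          exact integrable_zero _ _ _
        · rw [hzero, Gfun, if_neg hs]
          simp
    have hGnn : 0 ≤ Gfun b s := key.2 ▸ integral_nonneg h_nonneg
    refine ⟨hGnn, ?_⟩
    -- measure computation
    have hBmeas : MeasurableSet {p : ℝ × (Fin (n+1) → ℝ) | b 0 * p.1 + ∑ j, b' j * p.2 j ≤ s} := by
      refine measurableSet_le ?_ measurable_const
      exact (measurable_fst.const_mul _).add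
        (Finset.measurable_sum _ fun j _ => ((measurable_pi_apply j).comp measurable_snd).const_mul _)
    have hpre : {x : Fin (n+2) → ℝ | ∑ i, b i * x i ≤ s}
        = (MeasurableEquiv.piFinSuccAbove (fun _ : Fin (n+2) => ℝ) 0) ⁻¹'
          {p : ℝ × (Fin (n+1) → ℝ) | b 0 * p.1 + ∑ j, b' j * p.2 j ≤ s} := by
      ext x
      simp only [Set.mem_setOf_eq, Set.mem_preimage, MeasurableEquiv.piFinSuccAbove_apply,
        Fin.succAbove_zero]
      rw [Fin.sum_univ_succ]
      rfl
    rw [hpre,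
      (measurePreserving_piFinSuccAbove (fun _ : Fin (n+2) => expMeasure 1) 0).measure_preimage
        hBmeas.nullMeasurableSet,
      Measure.prod_apply hBmeas]
    have hslice : ∀ x : ℝ, (Prod.mk x ⁻¹' {p : ℝ × (Fin (n+1) → ℝ) |
        b 0 * p.1 + ∑ j, b' j * p.2 j ≤ s}) = {y | ∑ j, b' j * y j ≤ s - b 0 * x} := by
      intro x
      ext y
      simp only [Set.mem_preimage, Set.mem_setOf_eq]
      constructor <;> intro hy <;> linarith
    calc (∫⁻ x, (Measure.pi fun _ : Fin (n+1) => expMeasure 1)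
            (Prod.mk x ⁻¹' {p : ℝ × (Fin (n+1) → ℝ) | b 0 * p.1 + ∑ j, b' j * p.2 j ≤ s})
            ∂expMeasure 1)
        = ∫⁻ x, ENNReal.ofReal (Gfun b' (s - b 0 * x)) ∂expMeasure 1 := by
          refine lintegral_congr fun x => ?_
          rw [hslice x, (IH _).2]
      _ = ∫⁻ x, ENNReal.ofReal (h x) := by
          have hGm : Measurable fun x => ENNReal.ofReal (Gfun b' (s - b 0 * x)) :=
            ((measurable_Gfun b').comp
              (measurable_const.sub (measurable_id.const_mul _))).ennreal_ofReal
          have hpdfm : Measurable (exponentialPDF 1) :=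
            (measurable_exponentialPDFReal 1).ennreal_ofReal
          rw [show expMeasure 1 = volume.withDensity (exponentialPDF 1) from rfl,
            lintegral_withDensity_eq_lintegral_mul _ hpdfm hGm]
          refine lintegral_congr fun x => ?_
          simp only [Pi.mul_apply]
          rw [show (exponentialPDF 1 x : ENNReal)
              = ENNReal.ofReal (if 0 ≤ x then Real.exp (-x) else 0) by
                rw [exponentialPDF_eq]; congr 1; split_ifs <;> simp,
            ← ENNReal.ofReal_mul
              (by split_ifs with hx
                  exacts [le_of_lt (Real.exp_pos _), le_rfl])]
      _ = ENNReal.ofReal (∫ x, h x) :=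
          (ofReal_integral_eq_lintegral_ofReal key.1
            (Filter.Eventually.of_forall h_nonneg)).symm
      _ = ENNReal.ofReal (Gfun b s) := by rw [key.2]

end OutageAux

end OutageAuxSection

/-- Proposition 1: outage probability of a beamforming system with hardware impairments.
With SNDR `γ ω = (γ̃ * ∑ i, X i ω) / (γ̃ * ∑ i, c i * X i ω + 1)`, threshold rate `rth > 0`,
`γth = 2 ^ rth - 1` and `b i = 1 - c i * γth` positive and pairwise distinct, the outage
probability `P(log₂(1 + γ) ≤ rth)` equals `∑ i, Ξ i * (1 - exp (-γth / (γ̃ * b i)))`. -/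
theorem outage_probability_hardware_impairments
    {Ω : Type*} [MeasurableSpace Ω] (μ : Measure Ω) [IsProbabilityMeasure μ]
    (N : ℕ) (hN : 1 ≤ N)
    (X : Fin N → Ω → ℝ) (hXmeas : ∀ i, Measurable (X i))
    (hXindep : iIndepFun X μ)
    (hXexp : ∀ i, Measure.map (X i) μ = expMeasure 1)
    (γSNR : ℝ) (hγSNR : 0 < γSNR)
    (c : Fin N → ℝ) (hc : ∀ i, 0 ≤ c i)
    (rth : ℝ) (hrth : 0 < rth)
    (γth : ℝ) (hγth : γth = 2 ^ rth - 1)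
    (b : Fin N → ℝ) (hb : ∀ i, b i = 1 - c i * γth)
    (hbpos : ∀ i, 0 < b i) (hbdist : Function.Injective b)
    (γ : Ω → ℝ)
    (hγ : ∀ ω, γ ω = (γSNR * ∑ i, X i ω) / (γSNR * ∑ i, c i * X i ω + 1)) :
    (μ {ω | Real.logb 2 (1 + γ ω) ≤ rth}).toReal =
      ∑ i, (∏ j ∈ univ.erase i, b i / (b i - b j)) *
        (1 - Real.exp (-γth / (γSNR * b i))) := by

  obtain ⟨n, rfl⟩ : ∃ n, N = n + 1 := ⟨N - 1, (Nat.succ_pred_eq_of_pos hN).symm⟩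
  have hγthpos : 0 < γth := by
    rw [hγth]
    have h2 : (1:ℝ) < 2 ^ rth :=
      (Real.one_lt_rpow_iff_of_pos two_pos).mpr (Or.inl ⟨one_lt_two, hrth⟩)
    linarith
  set t : ℝ := γth / γSNR with htdef
  have ht : 0 ≤ t := le_of_lt (div_pos hγthpos hγSNR)
  have hgood : ∀ᵐ ω ∂μ, ∀ i, 0 ≤ X i ω := by
    rw [ae_all_iff]
    intro i
    refine (ae_iff).2 ?_
    have hset : {ω | ¬ 0 ≤ X i ω} = X i ⁻¹' Set.Iio 0 := by
      ext ω; simp [not_le]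
    rw [hset, ← Measure.map_apply (hXmeas i) measurableSet_Iio, hXexp i]
    exact OutageAux.expM_Iio
  have hEA : {ω | Real.logb 2 (1 + γ ω) ≤ rth} =ᵐ[μ] {ω | ∑ i, b i * X i ω ≤ t} := by
    filter_upwards [hgood] with ω hω
    have hS : 0 ≤ ∑ i, X i ω := Finset.sum_nonneg fun i _ => hω i
    have hSc : 0 ≤ ∑ i, c i * X i ω := Finset.sum_nonneg fun i _ => mul_nonneg (hc i) (hω i)
    have hD : 0 < γSNR * (∑ i, c i * X i ω) + 1 := by positivity
    have hγnn : 0 ≤ γ ω := by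
      rw [hγ]
      positivity
    have h2 : (2:ℝ) ^ rth = 1 + γth := by rw [hγth]; ring
    show (Real.logb 2 (1 + γ ω) ≤ rth) = (∑ i, b i * X i ω ≤ t)
    rw [eq_iff_iff,
      Real.logb_le_iff_le_rpow one_lt_two (by linarith : (0:ℝ) < 1 + γ ω), h2,
      show (1 + γ ω ≤ 1 + γth) ↔ (γ ω ≤ γth) from by constructor <;> intro <;> linarith,
      hγ, div_le_iff₀ hD]
    have hsum : ∑ i, b i * X i ω = (∑ i, X i ω) - γth * ∑ i, c i * X i ω := by
      rw [Finset.mul_sum, ← Finset.sum_sub_distrib]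
      refine Finset.sum_congr rfl fun i _ => ?_
      rw [hb i]; ring
    rw [htdef, le_div_iff₀ hγSNR, hsum]
    have hx : γth * (γSNR * (∑ i, c i * X i ω) + 1)
        = (γth * ∑ i, c i * X i ω) * γSNR + γth := by ring
    have hy : ((∑ i, X i ω) - γth * ∑ i, c i * X i ω) * γSNR
        = (∑ i, X i ω) * γSNR - (γth * ∑ i, c i * X i ω) * γSNR := by ring
    have hz : γSNR * (∑ i, X i ω) = (∑ i, X i ω) * γSNR := mul_comm _ _
    constructor <;> intro h' <;> linarith
  have hTmeas : Measurable fun ω => fun i => X i ω := measurable_pi_lambda _ hXmeas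
  have hmap : Measure.map (fun ω i => X i ω) μ
      = Measure.pi (fun _ : Fin (n+1) => expMeasure 1) := by
    refine (Measure.pi_eq fun s hs => ?_).symm
    rw [Measure.map_apply hTmeas (MeasurableSet.univ_pi hs)]
    have hpre : (fun ω i => X i ω) ⁻¹' Set.pi Set.univ s = ⋂ i ∈ Finset.univ, X i ⁻¹' s i := by
      ext ω; simp [Set.mem_pi]
    rw [hpre, hXindep.measure_inter_preimage_eq_mul (S := Finset.univ) (fun i _ => hs i)]
    exact Finset.prod_congr rfl fun i _ => by
      rw [← Measure.map_apply (hXmeas i) (hs i), hXexp i]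
  have hCmeas : MeasurableSet {x : Fin (n+1) → ℝ | ∑ i, b i * x i ≤ t} := by
    refine measurableSet_le ?_ measurable_const
    exact Finset.measurable_sum _ fun i _ => (measurable_pi_apply i).const_mul _
  have hkey := OutageAux.hypo n b hbpos hbdist t
  rw [measure_congr hEA,
    show {ω | ∑ i, b i * X i ω ≤ t}
      = (fun ω i => X i ω) ⁻¹' {x : Fin (n+1) → ℝ | ∑ i, b i * x i ≤ t} from rfl,
    ← Measure.map_apply hTmeas hCmeas, hmap, hkey.2, ENNReal.toReal_ofReal hkey.1]
  rw [OutageAux.Gfun, if_pos ht]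
  have hexp : ∀ i : Fin (n+1), Real.exp (-γth / (γSNR * b i)) = Real.exp (-(t / b i)) := by
    intro i
    congr 1
    rw [htdef, div_div, neg_div]
  have hXis : ∑ i, ∏ j ∈ univ.erase i, b i / (b i - b j) = 1 := by
    simpa [OutageAux.XiC] using OutageAux.sumXi_eq_one b (fun i => (hbpos i).ne') hbdist
  simp only [OutageAux.XiC, mul_sub, mul_one]
  rw [Finset.sum_sub_distrib, hXis]
  congr 1
  exact Finset.sum_congr rfl fun i _ => by rw [hexp i]
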